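/- Let Γ = (V,E) be a finite multigraph with an orientation of its edges, and let G be a finite abelian group of order n. The number of nowhere-zero G-flows of Γ (functions φ : E → G∖{0} such that at each vertex the sum of values on outgoing edges equals the sum on incoming edges) equals Σ_{A ⊆ E} (−1)^{|E∖A|} n^{|A| − |V| + k(A)}, where k(A) is the number of connected components of the spanning subgraph (V, A). -/

import Mathlib

structure Multigraph (V E : Type*) where
  tail : E → V
  head : E → V

def Multigraph.subgraph {V E : Type*} (Γ : Multigraph V E) (A : Finset E) : SimpleGraph V where
  Adj v w := v ≠ w ∧ ∃ e ∈ A, (Γ.tail e = v ∧ Γ.head e = w) ∨ (Γ.tail e = w ∧ Γ.head e = v)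
  symm := by
    constructor
    intro a b h
    obtain ⟨h1, e, he, h2⟩ := h
    exact ⟨h1.symm, e, he, h2.symm⟩
  loopless := by constructor; intro a h; exact h.1 rfl

noncomputable def Multigraph.k {V E : Type*} (Γ : Multigraph V E) (A : Finset E) : ℕ :=
  Nat.card (Γ.subgraph A).ConnectedComponent

open Finset

section Aux

variable {V E : Type*} [Fintype V] [Fintype E] [DecidableEq V] [DecidableEq E]
  (Γ : Multigraph V E) (G : Type*) [AddCommGroup G] [Fintype G]

/-- The boundary map. -/
def flowD (A : Finset E) : ({e // e ∈ A} → G) →+ (V → G) where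
  toFun φ := fun v => ∑ e : {e // e ∈ A},
    ((if Γ.tail e.1 = v then φ e else 0) - (if Γ.head e.1 = v then φ e else 0))
  map_zero' := by funext v; simp
  map_add' φ ψ := by
    funext v
    rw [Pi.add_apply, ← Finset.sum_add_distrib]
    refine Finset.sum_congr rfl fun e _ => ?_
    split_ifs <;> simp <;> abel

open scoped Classical in
/-- Sum over each connected component. -/
noncomputable def compS (A : Finset E) :
    (V → G) →+ ((Γ.subgraph A).ConnectedComponent → G) where
  toFun g := fun c => ∑ v ∈ univ.filter
      (fun v => (Γ.subgraph A).connectedComponentMk v = c), g v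
  map_zero' := by funext c; simp
  map_add' φ ψ := by funext c; simp [Finset.sum_add_distrib]

lemma edge_mem (A : Finset E) {e : E} (he : e ∈ A) (x : G) :
    (Pi.single (Γ.tail e) x - Pi.single (Γ.head e) x) ∈ (flowD Γ G A).range := by
  refine ⟨Pi.single (⟨e, he⟩ : {e // e ∈ A}) x, ?_⟩
  funext v
  simp only [flowD, AddMonoidHom.coe_mk, ZeroHom.coe_mk]
  rw [Finset.sum_eq_single (⟨e, he⟩ : {e // e ∈ A})]
  · simp [Pi.single_apply, eq_comm]
  · intro b _ hb
    have hbe : (b : E) ≠ e := fun h => hb (Subtype.ext h)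
    simp [Pi.single_apply, hbe, hb]
  · simp

lemma reach_mem (A : Finset E) {v w : V} (x : G) (h : (Γ.subgraph A).Reachable v w) :
    (Pi.single v x - Pi.single w x) ∈ (flowD Γ G A).range := by
  obtain ⟨p⟩ := h
  induction p with
  | nil => rw [sub_self]; exact zero_mem _
  | @cons a b c hab p ih =>
    obtain ⟨hne, e, he, hor⟩ := hab
    have h1 : (Pi.single a x - Pi.single b x) ∈ (flowD Γ G A).range := by
      rcases hor with ⟨ht, hh⟩ | ⟨ht, hh⟩
      · rw [← ht, ← hh]; exact edge_mem Γ G A he x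
      · have h2 := neg_mem (edge_mem Γ G A he x)
        rw [ht, hh, neg_sub] at h2
        exact h2
    have h3 := add_mem h1 ih
    rwa [sub_add_sub_cancel] at h3

lemma mk_tail_head (A : Finset E) {e : E} (he : e ∈ A) :
    (Γ.subgraph A).connectedComponentMk (Γ.tail e) =
      (Γ.subgraph A).connectedComponentMk (Γ.head e) := by
  by_cases h : Γ.tail e = Γ.head e
  · rw [h]
  · exact SimpleGraph.ConnectedComponent.connectedComponentMk_eq_of_adj
      ⟨h, e, he, Or.inl ⟨rfl, rfl⟩⟩

lemma mk_out (A : Finset E) (c : (Γ.subgraph A).ConnectedComponent) :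
    (Γ.subgraph A).connectedComponentMk (Quot.out c) = c := Quot.out_eq c

lemma range_flowD (A : Finset E) : (flowD Γ G A).range = (compS Γ G A).ker := by
  classical
  apply le_antisymm
  · rintro _ ⟨φ, rfl⟩
    rw [AddMonoidHom.mem_ker]
    funext c
    simp only [compS, flowD, AddMonoidHom.coe_mk, ZeroHom.coe_mk, Pi.zero_apply]
    rw [Finset.sum_comm]
    refine Finset.sum_eq_zero fun e _ => ?_
    rw [Finset.sum_sub_distrib, Finset.sum_ite_eq, Finset.sum_ite_eq]
    have : Γ.tail e.1 ∈ univ.filter (fun v => (Γ.subgraph A).connectedComponentMk v = c) ↔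
        Γ.head e.1 ∈ univ.filter (fun v => (Γ.subgraph A).connectedComponentMk v = c) := by
      simp [mk_tail_head Γ A e.2]
    by_cases h : Γ.tail e.1 ∈ univ.filter (fun v => (Γ.subgraph A).connectedComponentMk v = c)
    · rw [if_pos h, if_pos (this.mp h), sub_self]
    · rw [if_neg h, if_neg (fun hh => h (this.mpr hh)), sub_self]
  · intro g hg
    rw [AddMonoidHom.mem_ker] at hg
    have key : g = ∑ v : V, (Pi.single v (g v) -
        Pi.single (Quot.out ((Γ.subgraph A).connectedComponentMk v)) (g v)) := by
      rw [Finset.sum_sub_distrib, Finset.univ_sum_single]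
      have hz : ∑ v : V,
          (Pi.single (Quot.out ((Γ.subgraph A).connectedComponentMk v)) (g v) : V → G)
          = 0 := by
        haveI : Fintype (Γ.subgraph A).ConnectedComponent := Fintype.ofFinite _
        rw [← Finset.sum_fiberwise univ (fun v => (Γ.subgraph A).connectedComponentMk v)
          (fun v => (Pi.single (Quot.out ((Γ.subgraph A).connectedComponentMk v)) (g v) : V → G))]
        refine Finset.sum_eq_zero fun c _ => ?_
        have hsing : ∀ (i : V) (s : Finset V) (f : V → G),
            (∑ v ∈ s, (Pi.single i (f v) : V → G)) = Pi.single i (∑ v ∈ s, f v) := by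
          intro i s f
          funext j
          by_cases hj : j = i <;> simp [Finset.sum_apply, Pi.single_apply, hj]
        have hstep : ∑ v ∈ univ.filter (fun v => (Γ.subgraph A).connectedComponentMk v = c),
            (Pi.single (Quot.out ((Γ.subgraph A).connectedComponentMk v)) (g v) : V → G)
            = ∑ v ∈ univ.filter (fun v => (Γ.subgraph A).connectedComponentMk v = c),
              (Pi.single (Quot.out c) (g v) : V → G) := by
          refine Finset.sum_congr rfl fun v hv => ?_
          rw [(Finset.mem_filter.mp hv).2]
        rw [hstep, hsing]
        have hs : ∑ v ∈ univ.filter (fun v => (Γ.subgraph A).connectedComponentMk v = c), g v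
            = 0 := by
          have := congrFun hg c
          simpa [compS] using this
        rw [hs, Pi.single_zero]
      rw [hz, sub_zero]
    rw [key]
    refine AddSubgroup.sum_mem _ fun v _ => ?_
    refine reach_mem Γ G A (g v) ?_
    exact SimpleGraph.ConnectedComponent.exact (by rw [mk_out])

lemma compS_surj (A : Finset E) : Function.Surjective (compS Γ G A) := by
  classical
  haveI : Fintype (Γ.subgraph A).ConnectedComponent := Fintype.ofFinite _
  intro h
  refine ⟨fun v => ∑ c : (Γ.subgraph A).ConnectedComponent,
    if Quot.out c = v then h c else 0, ?_⟩
  funext c0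
  simp only [compS, AddMonoidHom.coe_mk, ZeroHom.coe_mk]
  rw [Finset.sum_comm]
  have : ∀ c : (Γ.subgraph A).ConnectedComponent,
      (∑ v ∈ univ.filter (fun v => (Γ.subgraph A).connectedComponentMk v = c0),
        if Quot.out c = v then h c else 0) = if c = c0 then h c else 0 := by
    intro c
    rw [Finset.sum_ite_eq]
    congr 1
    simp [mk_out]
  rw [Finset.sum_congr rfl (fun c _ => this c), Finset.sum_ite_eq' univ c0]
  simp

lemma card_ker_mul (A : Finset E) :
    Nat.card (flowD Γ G A).ker * (Fintype.card G) ^ (Fintype.card V) =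
      (Fintype.card G) ^ (A.card + Γ.k A) := by
  classical
  haveI : Fintype (Γ.subgraph A).ConnectedComponent := Fintype.ofFinite _
  have h1 : Nat.card ({e // e ∈ A} → G) =
      Nat.card (flowD Γ G A).ker * Nat.card (flowD Γ G A).range := by
    rw [AddSubgroup.card_eq_card_quotient_mul_card_addSubgroup (flowD Γ G A).ker,
      Nat.card_congr (QuotientAddGroup.quotientKerEquivRange (flowD Γ G A)).toEquiv,
      Nat.mul_comm]
  have h2 : Nat.card (V → G) =
      Nat.card (compS Γ G A).ker * (Fintype.card G) ^ (Γ.k A) := by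
    rw [AddSubgroup.card_eq_card_quotient_mul_card_addSubgroup (compS Γ G A).ker,
      Nat.card_congr (QuotientAddGroup.quotientKerEquivRange (compS Γ G A)).toEquiv,
      Nat.mul_comm]
    congr 1
    rw [show (compS Γ G A).range = ⊤ from
      AddMonoidHom.range_eq_top.mpr (compS_surj Γ G A)]
    rw [Nat.card_congr AddSubgroup.topEquiv.toEquiv, Nat.card_eq_fintype_card,
      Fintype.card_fun]
    congr 1
    rw [Multigraph.k, Nat.card_eq_fintype_card]
  have hA : Nat.card ({e // e ∈ A} → G) = (Fintype.card G) ^ A.card := by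
    rw [Nat.card_eq_fintype_card, Fintype.card_fun, Fintype.card_coe]
  have hV : Nat.card (V → G) = (Fintype.card G) ^ (Fintype.card V) := by
    rw [Nat.card_eq_fintype_card, Fintype.card_fun]
  rw [range_flowD] at h1
  calc Nat.card (flowD Γ G A).ker * (Fintype.card G) ^ (Fintype.card V)
      = Nat.card (flowD Γ G A).ker * Nat.card (V → G) := by rw [hV]
    _ = Nat.card (flowD Γ G A).ker *
        (Nat.card (compS Γ G A).ker * (Fintype.card G) ^ (Γ.k A)) := by rw [h2]
    _ = (Nat.card (flowD Γ G A).ker * Nat.card (compS Γ G A).ker) *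
        (Fintype.card G) ^ (Γ.k A) := by ring
    _ = Nat.card ({e // e ∈ A} → G) * (Fintype.card G) ^ (Γ.k A) := by rw [h1]
    _ = (Fintype.card G) ^ A.card * (Fintype.card G) ^ (Γ.k A) := by rw [hA]
    _ = (Fintype.card G) ^ (A.card + Γ.k A) := by rw [pow_add]

lemma sum_ite_subtype (A : Finset E) (φ : E → G) (h0 : ∀ e ∉ A, φ e = 0)
    (p : E → V) (v : V) :
    (∑ e : {e // e ∈ A}, if p e.1 = v then φ e.1 else 0) =
      ∑ e ∈ univ.filter (fun e => p e = v), φ e := by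
  rw [Finset.sum_filter]
  rw [Finset.sum_coe_sort A (fun e => if p e = v then φ e else 0)]
  refine Finset.sum_subset (Finset.subset_univ A) fun e _ he => ?_
  by_cases hp : p e = v <;> simp [hp, h0 e he]

lemma kirch_iff (A : Finset E) (φ : E → G) (h0 : ∀ e ∉ A, φ e = 0) :
    (∀ v : V, ∑ e ∈ univ.filter (fun e => Γ.tail e = v), φ e =
      ∑ e ∈ univ.filter (fun e => Γ.head e = v), φ e) ↔
      flowD Γ G A (fun e => φ e.1) = 0 := by
  rw [funext_iff]
  refine forall_congr' fun v => ?_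
  have hflow : flowD Γ G A (fun e => φ e.1) v
      = (∑ e ∈ univ.filter (fun e => Γ.tail e = v), φ e)
        - ∑ e ∈ univ.filter (fun e => Γ.head e = v), φ e := by
    show (∑ e : {e // e ∈ A},
        ((if Γ.tail e.1 = v then φ e.1 else 0) - (if Γ.head e.1 = v then φ e.1 else 0))) = _
    rw [Finset.sum_sub_distrib, sum_ite_subtype (G := G) A φ h0 Γ.tail v,
      sum_ite_subtype (G := G) A φ h0 Γ.head v]
  rw [hflow, Pi.zero_apply, sub_eq_zero]

lemma card_flows (A : Finset E) (n : ℕ) (hn : Fintype.card G = n) :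
    Nat.card {φ : E → G // (∀ e ∉ A, φ e = 0) ∧ ∀ v : V,
        ∑ e ∈ univ.filter (fun e => Γ.tail e = v), φ e =
          ∑ e ∈ univ.filter (fun e => Γ.head e = v), φ e} =
      n ^ (A.card + Γ.k A - Fintype.card V) := by
  classical
  subst hn
  have eqv : {φ : E → G // (∀ e ∉ A, φ e = 0) ∧ ∀ v : V,
        ∑ e ∈ univ.filter (fun e => Γ.tail e = v), φ e =
          ∑ e ∈ univ.filter (fun e => Γ.head e = v), φ e} ≃ (flowD Γ G A).ker :=
    { toFun := fun φ => ⟨fun e => φ.1 e.1, by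
        rw [AddMonoidHom.mem_ker]
        exact (kirch_iff Γ G A φ.1 φ.2.1).mp φ.2.2⟩
      invFun := fun ψ => ⟨fun e => if h : e ∈ A then ψ.1 ⟨e, h⟩ else 0,
        fun e he => dif_neg he, by
          refine (kirch_iff Γ G A _ (fun e he => dif_neg he)).mpr ?_
          have hre : (fun e : {e // e ∈ A} =>
              if h : e.1 ∈ A then ψ.1 ⟨e.1, h⟩ else 0) = ψ.1 :=
            funext fun e => by rw [dif_pos e.2]
          rw [hre]
          exact AddMonoidHom.mem_ker.mp ψ.2⟩
      left_inv := fun φ => Subtype.ext (funext fun e => by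
        by_cases h : e ∈ A
        · simp [h]
        · simp [h, φ.2.1 e h])
      right_inv := fun ψ => Subtype.ext (funext fun e => dif_pos e.2) }
  rw [Nat.card_congr eqv]
  rcases Nat.lt_or_ge 1 (Fintype.card G) with hlt | hle
  · have hkey := card_ker_mul Γ G A
    have hdvd : Fintype.card G ^ Fintype.card V ∣ Fintype.card G ^ (A.card + Γ.k A) :=
      ⟨Nat.card (flowD Γ G A).ker, by rw [← hkey]; ring⟩
    have hle2 : Fintype.card V ≤ A.card + Γ.k A :=
      (Nat.pow_dvd_pow_iff_le_right hlt).mp hdvd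
    have : Fintype.card G ^ (A.card + Γ.k A) =
        Fintype.card G ^ (A.card + Γ.k A - Fintype.card V) *
          Fintype.card G ^ Fintype.card V := by
      rw [← pow_add, Nat.sub_add_cancel hle2]
    rw [this] at hkey
    exact Nat.eq_of_mul_eq_mul_right (Nat.pow_pos (by omega)) hkey
  · have h1 : Fintype.card G = 1 := le_antisymm hle Fintype.card_pos
    haveI : Subsingleton G := Fintype.card_le_one_iff_subsingleton.mp (le_of_eq h1)
    rw [h1, one_pow]
    exact Nat.card_eq_one_iff_unique.mpr
      ⟨⟨fun a b => Subtype.ext (Subsingleton.elim _ _)⟩, ⟨0⟩⟩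
  
end Aux

theorem card_nowhere_zero_flows {V E : Type*} [Fintype V] [Fintype E] [DecidableEq V]
    (Γ : Multigraph V E) (G : Type*) [AddCommGroup G] [Fintype G]
    (n : ℕ) (hn : Fintype.card G = n) :
    (Nat.card {φ : E → G // (∀ e, φ e ≠ 0) ∧ ∀ v : V,
        ∑ e ∈ Finset.univ.filter (fun e => Γ.tail e = v), φ e =
          ∑ e ∈ Finset.univ.filter (fun e => Γ.head e = v), φ e} : ℤ) =
      ∑ A : Finset E, (-1 : ℤ) ^ (Fintype.card E - A.card) *
        (n : ℤ) ^ (A.card + Γ.k A - Fintype.card V) := by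
  classical
  set T : Finset (E → G) := univ.filter (fun φ => ∀ v : V,
      ∑ e ∈ univ.filter (fun e => Γ.tail e = v), φ e =
        ∑ e ∈ univ.filter (fun e => Γ.head e = v), φ e) with hT
  set N : Finset E → ℕ := fun B =>
    (T.filter fun φ => univ.filter (fun e => φ e ≠ 0) = B).card with hN
  have hflow : ∀ A : Finset E, ((T.filter fun φ => ∀ e ∉ A, φ e = 0).card : ℤ)
      = (n : ℤ) ^ (A.card + Γ.k A - Fintype.card V) := by
    intro A
    have hc := card_flows Γ G A n hn
    rw [Nat.card_eq_fintype_card, Fintype.card_subtype] at hc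
    have heq : (T.filter fun φ => ∀ e ∉ A, φ e = 0) =
        univ.filter (fun φ : E → G => (∀ e ∉ A, φ e = 0) ∧ ∀ v : V,
          ∑ e ∈ univ.filter (fun e => Γ.tail e = v), φ e =
            ∑ e ∈ univ.filter (fun e => Γ.head e = v), φ e) := by
      rw [hT, Finset.filter_filter]
      ext φ
      simp [and_comm]
    rw [heq, hc]
    push_cast
    ring
  have decomp : ∀ A : Finset E,
      (T.filter fun φ => ∀ e ∉ A, φ e = 0).card = ∑ B ∈ A.powerset, N B := by
    intro A
    have hmem : ∀ φ ∈ T.filter (fun φ => ∀ e ∉ A, φ e = 0),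
        univ.filter (fun e => φ e ≠ 0) ∈ A.powerset := by
      intro φ hφ
      rw [Finset.mem_powerset]
      intro e he
      rw [Finset.mem_filter] at he
      by_contra heA
      exact he.2 ((Finset.mem_filter.mp hφ).2 e heA)
    rw [Finset.card_eq_sum_card_fiberwise hmem]
    refine Finset.sum_congr rfl fun B hB => ?_
    congr 1
    rw [Finset.filter_filter]
    refine Finset.filter_congr fun φ hφ => ?_
    constructor
    · exact And.right
    · intro hB2
      refine ⟨fun e he => ?_, hB2⟩
      by_contra h0
      have heB : e ∈ B := hB2 ▸ Finset.mem_filter.mpr ⟨Finset.mem_univ e, h0⟩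
      exact he (Finset.mem_powerset.mp hB heB)
  have main : ∑ A : Finset E, (-1 : ℤ) ^ (Fintype.card E - A.card) *
      ((T.filter fun φ => ∀ e ∉ A, φ e = 0).card : ℤ) = (N univ : ℤ) := by
    have step1 : ∀ A : Finset E, ((T.filter fun φ => ∀ e ∉ A, φ e = 0).card : ℤ)
        = ∑ B ∈ A.powerset, (N B : ℤ) := by
      intro A
      rw [decomp A]
      push_cast
      rfl
    calc ∑ A : Finset E, (-1 : ℤ) ^ (Fintype.card E - A.card) *
          ((T.filter fun φ => ∀ e ∉ A, φ e = 0).card : ℤ)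
        = ∑ A : Finset E, ∑ B ∈ univ,
            (if B ⊆ A then (-1 : ℤ) ^ (Fintype.card E - A.card) * (N B : ℤ) else 0) := by
          refine Finset.sum_congr rfl fun A _ => ?_
          rw [step1, Finset.mul_sum, ← Finset.sum_filter]
          congr 1
          ext B
          simp [Finset.mem_powerset]
      _ = ∑ B : Finset E, ∑ A ∈ univ,
            (if B ⊆ A then (-1 : ℤ) ^ (Fintype.card E - A.card) * (N B : ℤ) else 0) :=
          Finset.sum_comm
      _ = ∑ B : Finset E, (N B : ℤ) *
            ∑ A ∈ univ.filter (fun A => B ⊆ A), (-1 : ℤ) ^ (Fintype.card E - A.card) := by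
          refine Finset.sum_congr rfl fun B _ => ?_
          rw [Finset.mul_sum, ← Finset.sum_filter]
          exact Finset.sum_congr rfl fun A _ => mul_comm _ _
      _ = ∑ B : Finset E, (N B : ℤ) * (if B = univ then 1 else 0) := by
          refine Finset.sum_congr rfl fun B _ => ?_
          congr 1
          have hbij : ∑ A ∈ univ.filter (fun A => B ⊆ A), (-1 : ℤ) ^ (Fintype.card E - A.card)
              = ∑ C ∈ Bᶜ.powerset, (-1 : ℤ) ^ C.card := by
            refine Finset.sum_bij' (fun A _ => Aᶜ) (fun C _ => Cᶜ) ?_ ?_ ?_ ?_ ?_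
            · intro A hA
              rw [Finset.mem_powerset, Finset.compl_subset_compl]
              exact (Finset.mem_filter.mp hA).2
            · intro C hC
              rw [Finset.mem_filter]
              refine ⟨Finset.mem_univ _, ?_⟩
              exact Finset.subset_compl_comm.mp (Finset.mem_powerset.mp hC)
            · intro A _; exact compl_compl A
            · intro C _; exact compl_compl C
            · intro A _
              rw [Finset.card_compl]
          rw [hbij, Finset.sum_powerset_neg_one_pow_card]
          simp [Finset.compl_eq_empty_iff]
      _ = (N univ : ℤ) := by
          simp only [mul_ite, mul_one, mul_zero]
          rw [Finset.sum_ite_eq' univ univ (fun B => (N B : ℤ))]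
          simp
  have hL : (Nat.card {φ : E → G // (∀ e, φ e ≠ 0) ∧ ∀ v : V,
        ∑ e ∈ Finset.univ.filter (fun e => Γ.tail e = v), φ e =
          ∑ e ∈ Finset.univ.filter (fun e => Γ.head e = v), φ e} : ℤ) = (N univ : ℤ) := by
    rw [Nat.card_eq_fintype_card, Fintype.card_subtype]
    norm_cast
    congr 1
    ext φ
    simp [hT, hN, Finset.eq_univ_iff_forall, and_comm]
  rw [hL, ← main]
  exact Finset.sum_congr rfl fun A _ => by rw [hflow]
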